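/- A linear stochastic operator T given by stochastic matrix (t_{ij}) is orthogonal preserving if and only if the rows t_i = (t_{ik})_k and t_j = (t_{jk})_k are orthogonal (have disjoint supports) for all i ≠ j. -/

import Mathlib

open Function

def IsSimplexPt (x : ℕ → ℝ) : Prop := (∀ i, 0 ≤ x i) ∧ HasSum x 1

def Orth (x y : ℕ → ℝ) : Prop := Disjoint (support x) (support y)

def QSOCoef (P : ℕ → ℕ → ℕ → ℝ) : Prop :=
  (∀ i j k, 0 ≤ P i j k) ∧ (∀ i j k, P i j k = P j i k) ∧
  (∀ i j, HasSum (fun k => P i j k) 1)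

noncomputable def QSO (P : ℕ → ℕ → ℕ → ℝ) (x : ℕ → ℝ) : ℕ → ℝ :=
  fun k => ∑' i, ∑' j, P i j k * x i * x j

def IsOP (V : (ℕ → ℝ) → (ℕ → ℝ)) : Prop :=
  ∀ x y, IsSimplexPt x → IsSimplexPt y → Orth x y → Orth (V x) (V y)

def stdBasis (k : ℕ) : ℕ → ℝ := fun i => if i = k then 1 else 0

theorem lso_op_iff_rows (t : ℕ → ℕ → ℝ) (ht0 : ∀ i j, 0 ≤ t i j)
    (ht1 : ∀ i, HasSum (t i) 1) :
    IsOP (fun x k => ∑' i, t i k * x i) ↔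
      ∀ i j : ℕ, i ≠ j → Orth (t i) (t j) := by
  have hsp : ∀ k, IsSimplexPt (stdBasis k) := by
    intro k
    refine ⟨fun i => by unfold stdBasis; positivity, ?_⟩
    exact hasSum_ite_eq k (1 : ℝ)
  have heval : ∀ i, (fun k => ∑' m, t m k * stdBasis i m) = t i := by
    intro i
    funext k
    rw [tsum_eq_single i (fun m hm => by simp [stdBasis, hm])]
    simp [stdBasis]
  constructor
  · intro hop i j hij
    have horth : Orth (stdBasis i) (stdBasis j) := by
      rw [Orth, Set.disjoint_left]
      intro a ha hb
      rw [mem_support] at ha hb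
      simp only [stdBasis, ite_ne_right_iff] at ha hb
      exact hij (ha.1 ▸ hb.1)
    have h2 : Orth (fun k => ∑' m, t m k * stdBasis i m)
        (fun k => ∑' m, t m k * stdBasis j m) := hop _ _ (hsp i) (hsp j) horth
    rwa [heval i, heval j] at h2
  · intro hrows x y hx hy hxy
    rw [Orth, Set.disjoint_left]
    intro k hk hk'
    replace hk : (∑' m, t m k * x m) ≠ 0 := hk
    replace hk' : (∑' m, t m k * y m) ≠ 0 := hk'
    obtain ⟨i, hi⟩ : ∃ i, t i k * x i ≠ 0 := by
      by_contra h
      push_neg at h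
      exact hk (show (∑' m, t m k * x m) = 0 by
        rw [tsum_congr fun i => h i, tsum_zero])
    obtain ⟨j, hj⟩ : ∃ j, t j k * y j ≠ 0 := by
      by_contra h
      push_neg at h
      exact hk' (show (∑' m, t m k * y m) = 0 by
        rw [tsum_congr fun j => h j, tsum_zero])
    have hik : t i k ≠ 0 := fun h => hi (by simp [h])
    have hxi : x i ≠ 0 := fun h => hi (by simp [h])
    have hjk : t j k ≠ 0 := fun h => hj (by simp [h])
    have hyj : y j ≠ 0 := fun h => hj (by simp [h])
    have hij : i ≠ j := fun h =>
      Set.disjoint_left.mp hxy (mem_support.mpr hxi) (mem_support.mpr (h ▸ hyj))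
    exact Set.disjoint_left.mp (hrows i j hij) (mem_support.mpr hik)
      (mem_support.mpr hjk)
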